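/- For every fixed natural number K ≥ 3 there exist a constant C > 0 and a natural number N₀ such that for all N ≥ N₀, T(N, K) ≤ C · (log log N)^(2^(K−2) − 1), where log denotes the natural logarithm. -/

import Mathlib

/-- The outcome of a cascaded test `t` (a list of items) on a defective set `S`:
the first element of `t` belonging to `S`, or `none` if there is none. -/
def outcome {N : ℕ} (t : List (Fin N)) (S : Finset (Fin N)) : Option (Fin N) :=
  (t.filter (fun x => x ∈ S)).head?

/-- A testing design `𝒯` (an indexed family of tests) is feasible for `(N, K)` if the
map sending each `S ⊆ Fin N` with `|S| ≤ K` to its vector of test outcomes is injective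
on `{S | |S| ≤ K}`. -/
def Feasible (N K : ℕ) {T : ℕ} (𝒯 : Fin T → List (Fin N)) : Prop :=
  Set.InjOn (fun (S : Finset (Fin N)) => fun i : Fin T => outcome (𝒯 i) S)
    {S : Finset (Fin N) | S.card ≤ K}

/-- `TNK N K`: the minimum number of tests over all duplicate-free testing designs
feasible for `(N, K)`. -/
noncomputable def TNK (N K : ℕ) : ℕ :=
  sInf {T : ℕ | ∃ 𝒯 : Fin T → List (Fin N), (∀ i, (𝒯 i).Nodup) ∧ Feasible N K 𝒯}

/-- `fT 𝒯 S v`: the number of tests in the design `𝒯` whose outcome on `S` is `some v`. -/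
def fT {N T : ℕ} (𝒯 : Fin T → List (Fin N)) (S : Finset (Fin N)) (v : Fin N) : ℕ :=
  (Finset.univ.filter (fun i : Fin T => outcome (𝒯 i) S = some v)).card

/-- A design is in systematic form if every test is nonempty and the first element of
each test does not occur in any other test. -/
def Systematic {N T : ℕ} (𝒯 : Fin T → List (Fin N)) : Prop :=
  ∀ i : Fin T, 𝒯 i ≠ [] ∧ ∀ u : Fin N, (𝒯 i).head? = some u → ∀ j : Fin T, j ≠ i → u ∉ 𝒯 j

namespace Stmt17



def bitsToNat : List Bool → ℕ
  | [] => 0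
  | b :: bs => b.toNat + 2 * bitsToNat bs

lemma bitsToNat_lt (l : List Bool) : bitsToNat l < 2 ^ l.length := by
  induction l with
  | nil => simp [bitsToNat]
  | cons b bs ih =>
    simp only [bitsToNat, List.length_cons, pow_succ]
    cases b <;> simp [Bool.toNat] <;> omega

lemma testBit_bitsToNat (l : List Bool) (i : ℕ) :
    (bitsToNat l).testBit i = l.getD i false := by
  induction l generalizing i with
  | nil => simp [bitsToNat]
  | cons b bs ih =>
    cases i with
    | zero =>
      simp only [Nat.testBit_zero, bitsToNat, List.getD_cons_zero]
      cases b <;> simp [Bool.toNat, Nat.add_mul_mod_self_left]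
    | succ i =>
      rw [Nat.testBit_succ]
      have h2 : (b.toNat + 2 * bitsToNat bs) / 2 = bitsToNat bs := by
        cases b <;> simp [Bool.toNat] <;> omega
      simp only [bitsToNat, h2, ih, List.getD_cons_succ]

def maskOf {L : ℕ} (f : Fin L → Bool) : ℕ := bitsToNat (List.ofFn f)

lemma maskOf_lt {L : ℕ} (f : Fin L → Bool) : maskOf f < 2 ^ L := by
  simpa [maskOf] using bitsToNat_lt (List.ofFn f)

lemma testBit_maskOf {L : ℕ} (f : Fin L → Bool) (p : Fin L) :
    (maskOf f).testBit p = f p := by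
  rw [maskOf, testBit_bitsToNat]
  simp [List.getD_eq_getElem?_getD, List.getElem?_ofFn, p.isLt]

lemma testBit_log_self {d : ℕ} (hd : d ≠ 0) : d.testBit (Nat.log 2 d) = true := by
  have h1 : 2 ^ Nat.log 2 d ≤ d := Nat.pow_log_le_self 2 hd
  have h2 : d < 2 ^ (Nat.log 2 d + 1) := Nat.lt_pow_succ_log_self (by norm_num) _
  rw [Nat.testBit_eq_decide_div_mod_eq]
  have hp : 0 < 2 ^ Nat.log 2 d := Nat.pow_pos (by norm_num)
  have e1 : 1 ≤ d / 2 ^ Nat.log 2 d := (Nat.le_div_iff_mul_le hp).2 (by omega)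
  have e2 : d / 2 ^ Nat.log 2 d < 2 := by
    rw [Nat.div_lt_iff_lt_mul hp]
    rw [pow_succ] at h2; omega
  have : d / 2 ^ Nat.log 2 d = 1 := by omega
  simp [this]

lemma xor_lt_xor {x y m : ℕ} (hxy : x ≠ y)
    (h : m.testBit (Nat.log 2 (x ^^^ y)) = x.testBit (Nat.log 2 (x ^^^ y))) :
    x ^^^ m < y ^^^ m := by
  set p := Nat.log 2 (x ^^^ y) with hp
  have hd : x ^^^ y ≠ 0 := fun hc => hxy (xor_eq_zero_iff.1 hc)
  have hbit : (x.testBit p ^^ y.testBit p) = true := by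
    rw [← Nat.testBit_xor]; exact testBit_log_self hd
  apply Nat.lt_of_testBit p
  · rw [Nat.testBit_xor, h, Bool.xor_self]
  · rw [Nat.testBit_xor, h]
    revert hbit; cases x.testBit p <;> cases y.testBit p <;> simp
  · intro j hj
    have hfj : (x ^^^ y).testBit j = false := by
      apply Nat.testBit_lt_two_pow
      calc x ^^^ y < 2 ^ (p + 1) := Nat.lt_pow_succ_log_self (by norm_num) _
        _ ≤ 2 ^ j := Nat.pow_le_pow_right (by norm_num) hj
    rw [Nat.testBit_xor] at hfj
    rw [Nat.testBit_xor, Nat.testBit_xor]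
    revert hfj; cases x.testBit j <;> cases y.testBit j <;> simp



/-- the list of all elements of `Fin N` sorted by `x ^^^ m`, assuming `N ≤ 2^L`. -/
def testList (N L m : ℕ) : List (Fin N) :=
  (List.range (2 ^ L)).filterMap
    (fun v => if h : v ^^^ m < N then some ⟨v ^^^ m, h⟩ else none)

lemma testList_nodup (N L m : ℕ) : (testList N L m).Nodup := by
  apply List.Nodup.filterMap _ List.nodup_range
  intro a a' b hb hb'
  simp only [Option.mem_def] at hb hb'
  split at hb <;> [skip; simp_all]
  split at hb' <;> [skip; simp_all]
  have h1 : (b : ℕ) = a ^^^ m := by rw [← Option.some_inj.1 hb]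
  have h2 : (b : ℕ) = a' ^^^ m := by rw [← Option.some_inj.1 hb']
  have h3 : a ^^^ m ^^^ m = a' ^^^ m ^^^ m := by rw [← h1, ← h2]
  simpa [xor_cancel_right] using h3

lemma head?_filterMap_range {α : Type*} (g : ℕ → Option α) (n v : ℕ) (x : α)
    (hv : v < n) (hx : g v = some x) (hmin : ∀ w, w < v → g w = none) :
    ((List.range n).filterMap g).head? = some x := by
  have hn : n = (v + 1) + (n - v - 1) := by omega
  rw [hn, List.range_add, List.filterMap_append, List.head?_append]
  have h1 : (List.range (v+1)).filterMap g = [x] := by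
    rw [List.range_succ, List.filterMap_append]
    have : (List.range v).filterMap g = [] :=
      List.filterMap_eq_nil_iff.2 (fun a ha => hmin a (List.mem_range.1 ha))
    simp [this, hx]
  rw [h1]; rfl

/-- If `x ∈ S` has strictly minimal key `x ^^^ m` among `S`, it is the outcome. -/
lemma outcome_testList {N L m : ℕ} (hN : N ≤ 2 ^ L) (hm : m < 2 ^ L)
    (S : Finset (Fin N)) (x : Fin N) (hxS : x ∈ S)
    (hmin : ∀ y ∈ S, y ≠ x → (x : ℕ) ^^^ m < (y : ℕ) ^^^ m) :
    outcome (testList N L m) S = some x := by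
  rw [outcome, testList, List.filter_filterMap]
  set g : ℕ → Option (Fin N) := fun v =>
    Option.filter (fun z => z ∈ S) (if h : v ^^^ m < N then some ⟨v ^^^ m, h⟩ else none) with hg
  have hxL : (x : ℕ) < 2 ^ L := lt_of_lt_of_le x.isLt hN
  have hkey : ((x : ℕ) ^^^ m) ^^^ m = (x : ℕ) := xor_cancel_right _ _
  apply head?_filterMap_range g (2 ^ L) ((x:ℕ) ^^^ m) x
  · exact Nat.xor_lt_two_pow hxL hm
  · have hlt : ((x : ℕ) ^^^ m) ^^^ m < N := by rw [hkey]; exact x.isLt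
    simp only [hg, dif_pos hlt]
    have : (⟨((x : ℕ) ^^^ m) ^^^ m, hlt⟩ : Fin N) = x := by
      apply Fin.ext; simp [hkey]
    rw [this]
    simp [Option.filter, hxS]
  · intro w hw
    simp only [hg]
    split
    · rename_i h
      set z : Fin N := ⟨w ^^^ m, h⟩ with hz
      have hzw : (z : ℕ) ^^^ m = w := by simp [hz, xor_cancel_right]
      have hzS : z ∉ S := by
        intro hcon
        rcases eq_or_ne z x with rfl | hne
        · omega
        · have := hmin z hcon hne; omega
      simp [Option.filter, hzS]
    · rfl

lemma outcome_mem {N : ℕ} {t : List (Fin N)} {S : Finset (Fin N)} {v : Fin N}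
    (h : outcome t S = some v) : v ∈ S := by
  rw [outcome] at h
  have hv : v ∈ t.filter (fun x => x ∈ S) := by
    cases hl : t.filter (fun x => x ∈ S) with
    | nil => rw [hl] at h; simp at h
    | cons a l => rw [hl] at h; simp at h; simp [h]
  simpa using (List.mem_filter.1 hv).2



def GoodArr (L t T : ℕ) (A : Fin T → Fin L → Bool) : Prop :=
  ∀ c : Fin t → Fin L, Function.Injective c → ∀ ε : Fin t → Bool,
    ∃ i, ∀ j, A i (c j) = ε j

variable {L t T : ℕ}

lemma card_goodRow (c : Fin t → Fin L) (hc : Function.Injective c) (ε : Fin t → Bool)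
    (hL : t ≤ L) :
    2 ^ (L - t) ≤ (Finset.univ.filter (fun f : Fin L → Bool => ∀ j, f (c j) = ε j)).card := by
  classical
  set s : Finset (Fin L) := Finset.univ.image c with hs
  have hscard : s.card = t := by
    rw [hs, Finset.card_image_of_injective _ hc, Finset.card_univ, Fintype.card_fin]
  set F : ({x : Fin L // x ∉ s} → Bool) → (Fin L → Bool) := fun g x =>
    if h : ∃ j, c j = x then ε h.choose
    else g ⟨x, by rw [hs]; simp only [Finset.mem_image, Finset.mem_univ, true_and]; push_neg;
                  intro j hj; exact h ⟨j, hj⟩⟩ with hF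
  have hmaps : ∀ g, F g ∈ Finset.univ.filter (fun f : Fin L → Bool => ∀ j, f (c j) = ε j) := by
    intro g
    simp only [Finset.mem_filter, Finset.mem_univ, true_and]
    intro j
    have h : ∃ j', c j' = c j := ⟨j, rfl⟩
    have : h.choose = j := hc h.choose_spec
    rw [hF]; simp only [dif_pos h, this]
  have hinj : Function.Injective F := by
    intro g1 g2 hg
    funext x
    rcases x with ⟨x, hx⟩
    have hne : ¬ ∃ j, c j = x := by
      intro ⟨j, hj⟩
      exact hx (by rw [hs]; exact Finset.mem_image.2 ⟨j, Finset.mem_univ _, hj⟩)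
    have := congrFun hg x
    rw [hF] at this
    simpa [dif_neg hne] using this
  calc 2 ^ (L - t) = Fintype.card ({x : Fin L // x ∉ s} → Bool) := by
        rw [Fintype.card_fun, Fintype.card_bool]
        congr 1
        rw [Fintype.card_subtype]
        have : Finset.univ.filter (fun x => x ∉ s) = sᶜ := by
          ext x; simp
        rw [this, Finset.card_compl, hscard, Fintype.card_fin]
    _ = (Finset.univ : Finset ({x : Fin L // x ∉ s} → Bool)).card := (Finset.card_univ).symm
    _ ≤ _ := Finset.card_le_card_of_injOn F (fun g _ => hmaps g) hinj.injOn

lemma exists_goodArr (hL : t ≤ L)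
    (hT : L ^ t * 2 ^ t * (2 ^ L - 2 ^ (L - t)) ^ T < ((2 : ℕ) ^ L) ^ T) :
    ∃ A : Fin T → Fin L → Bool, GoodArr L t T A := by
  classical
  by_contra hcon
  push_neg at hcon
  set 𝒞 : Finset ((Fin t → Fin L) × (Fin t → Bool)) :=
    Finset.univ.filter (fun ce => Function.Injective ce.1) with h𝒞
  set badRow : (Fin t → Fin L) → (Fin t → Bool) → Finset (Fin L → Bool) := fun c ε =>
    (Finset.univ.filter (fun f : Fin L → Bool => ∀ j, f (c j) = ε j))ᶜ with hbr
  set badArr : ((Fin t → Fin L) × (Fin t → Bool)) → Finset (Fin T → Fin L → Bool) :=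
    fun ce => Fintype.piFinset (fun _ => badRow ce.1 ce.2) with hba
  have hsub : (Finset.univ : Finset (Fin T → Fin L → Bool)) ⊆ 𝒞.biUnion badArr := by
    intro A _
    have := hcon A
    rw [GoodArr] at this
    push_neg at this
    obtain ⟨c, hc, ε, hbad⟩ := this
    refine Finset.mem_biUnion.2 ⟨⟨c, ε⟩, ?_, ?_⟩
    · rw [h𝒞]; simp only [Finset.mem_filter, Finset.mem_univ, true_and]; exact hc
    · simp only [hba]
      refine Fintype.mem_piFinset.2 (fun i => ?_)
      simp only [hbr]
      simp only [Finset.mem_compl, Finset.mem_filter, Finset.mem_univ, true_and]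
      push_neg
      obtain ⟨j, hj⟩ := hbad i
      exact ⟨j, hj⟩
  have hcard : ((2:ℕ) ^ L) ^ T ≤ L ^ t * 2 ^ t * (2 ^ L - 2 ^ (L - t)) ^ T := by
    have h1 : ((2:ℕ) ^ L) ^ T = (Finset.univ : Finset (Fin T → Fin L → Bool)).card := by
      rw [Finset.card_univ, Fintype.card_fun, Fintype.card_fun, Fintype.card_bool,
        Fintype.card_fin, Fintype.card_fin]
    have h2 : ∀ ce ∈ 𝒞, (badArr ce).card ≤ (2 ^ L - 2 ^ (L - t)) ^ T := by
      intro ce hce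
      rw [h𝒞] at hce
      have hcinj : Function.Injective ce.1 :=
        (Finset.mem_filter.1 hce).2
      simp only [hba]
      rw [Fintype.card_piFinset]
      have hrow : (badRow ce.1 ce.2).card ≤ 2 ^ L - 2 ^ (L - t) := by
        simp only [hbr]
        rw [Finset.card_compl]
        have := card_goodRow ce.1 hcinj ce.2 hL
        have hcardfun : Fintype.card (Fin L → Bool) = 2 ^ L := by
          rw [Fintype.card_fun, Fintype.card_bool, Fintype.card_fin]
        rw [hcardfun]
        exact Nat.sub_le_sub_left this _
      calc ∏ _i : Fin T, (badRow ce.1 ce.2).card = (badRow ce.1 ce.2).card ^ T := by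
            rw [Finset.prod_const, Finset.card_univ, Fintype.card_fin]
        _ ≤ (2 ^ L - 2 ^ (L - t)) ^ T := Nat.pow_le_pow_left hrow T
    have h3 : 𝒞.card ≤ L ^ t * 2 ^ t := by
      calc 𝒞.card ≤ Fintype.card ((Fin t → Fin L) × (Fin t → Bool)) := by
            rw [← Finset.card_univ]; exact Finset.card_filter_le _ _
        _ = L ^ t * 2 ^ t := by
            rw [Fintype.card_prod, Fintype.card_fun, Fintype.card_fun, Fintype.card_bool,
              Fintype.card_fin, Fintype.card_fin]
    calc ((2:ℕ) ^ L) ^ T = (Finset.univ : Finset (Fin T → Fin L → Bool)).card := h1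
      _ ≤ (𝒞.biUnion badArr).card := Finset.card_le_card hsub
      _ ≤ ∑ ce ∈ 𝒞, (badArr ce).card := Finset.card_biUnion_le
      _ ≤ ∑ _ce ∈ 𝒞, (2 ^ L - 2 ^ (L - t)) ^ T := Finset.sum_le_sum h2
      _ = 𝒞.card * (2 ^ L - 2 ^ (L - t)) ^ T := by rw [Finset.sum_const, smul_eq_mul]
      _ ≤ L ^ t * 2 ^ t * (2 ^ L - 2 ^ (L - t)) ^ T :=
          Nat.mul_le_mul_right _ h3
  omega



lemma pow_succ_add_le (x : ℕ) : ∀ n, x ^ (n+1) + (n+1) * x ^ n ≤ (x+1) ^ (n+1)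
  | 0 => by simp
  | n+1 => by
    have ih := pow_succ_add_le x n
    have h2 : (x ^ (n+1) + (n+1) * x ^ n) * (x+1) ≤ (x+1) ^ (n+1) * (x+1) :=
      Nat.mul_le_mul_right _ ih
    calc x ^ (n+2) + (n+2) * x ^ (n+1)
        ≤ x ^ (n+2) + (n+2) * x ^ (n+1) + (n+1) * x ^ n := Nat.le_add_right _ _
      _ = (x ^ (n+1) + (n+1) * x ^ n) * (x+1) := by ring
      _ ≤ (x+1) ^ (n+1) * (x+1) := h2
      _ = (x+1) ^ (n+2) := (pow_succ _ _).symm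

lemma two_mul_pow_le {x : ℕ} (hx : 1 ≤ x) : 2 * x ^ x ≤ (x+1) ^ x := by
  obtain ⟨m, rfl⟩ : ∃ m, x = m + 1 := ⟨x - 1, by omega⟩
  have h := pow_succ_add_le (m+1) m
  have e : (m+1) * (m+1) ^ m = (m+1) ^ (m+1) := by rw [pow_succ, mul_comm]
  omega

lemma counting_ineq (L t : ℕ) (ht : 1 ≤ t) (hL : t ≤ L) :
    L ^ t * 2 ^ t * (2 ^ L - 2 ^ (L - t)) ^ ((2^t - 1) * (Nat.log 2 (L^t * 2^t) + 1))
      < ((2:ℕ) ^ L) ^ ((2^t - 1) * (Nat.log 2 (L^t * 2^t) + 1)) := by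
  set B := L ^ t * 2 ^ t with hB
  set s := Nat.log 2 B + 1 with hs
  set a := 2 ^ t with ha
  set T := (a - 1) * s with hT
  have ha2 : 2 ≤ a := by
    rw [ha]
    calc (2:ℕ) = 2^1 := (pow_one 2).symm
      _ ≤ 2^t := Nat.pow_le_pow_right (by norm_num) ht
  have hBpos : 1 ≤ B := by
    have h1 : 1 ≤ L := le_trans ht hL
    exact Nat.one_le_iff_ne_zero.2 (by positivity)
  have hBs : B < 2 ^ s := Nat.lt_pow_succ_log_self (by norm_num) _
  have hkey : 2 ^ s * (a - 1) ^ T ≤ a ^ T := by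
    have h1 : 2 * (a-1) ^ (a-1) ≤ a ^ (a-1) := by
      have h2 := two_mul_pow_le (x := a - 1) (by omega)
      have he : a - 1 + 1 = a := by omega
      rwa [he] at h2
    calc 2 ^ s * (a - 1) ^ T = (2 * (a-1)^(a-1)) ^ s := by
          rw [hT, pow_mul, mul_pow]
      _ ≤ (a ^ (a-1)) ^ s := Nat.pow_le_pow_left h1 s
      _ = a ^ T := by rw [hT, pow_mul]
  have hstrict : B * (a - 1) ^ T < a ^ T := by
    have hpos : 0 < (a - 1) ^ T := Nat.pow_pos (by omega)
    calc B * (a - 1) ^ T < 2 ^ s * (a - 1) ^ T := (Nat.mul_lt_mul_right hpos).2 hBs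
      _ ≤ a ^ T := hkey
  have h2L : 2 ^ (L - t) * a = 2 ^ L := by
    rw [ha, ← pow_add]
    congr 1
    omega
  have hsplit : 2 ^ L - 2 ^ (L - t) = 2 ^ (L - t) * (a - 1) := by
    rw [Nat.mul_sub, mul_one, h2L]
  calc B * (2 ^ L - 2 ^ (L - t)) ^ T = B * ((2 ^ (L-t)) ^ T * (a - 1) ^ T) := by
        rw [hsplit, mul_pow]
    _ = (2 ^ (L-t)) ^ T * (B * (a - 1) ^ T) := by ring
    _ < (2 ^ (L-t)) ^ T * a ^ T := by
        have hpos : 0 < (2 ^ (L-t)) ^ T := Nat.pow_pos (Nat.pow_pos (by norm_num))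
        exact (Nat.mul_lt_mul_left hpos).2 hstrict
    _ = ((2:ℕ) ^ L) ^ T := by rw [← mul_pow, h2L]


lemma main_bound (K N : ℕ) (hK : 3 ≤ K) (hN : 2 ^ K ≤ N) :
    TNK N K ≤ (2^(K-1) - 1) * (Nat.log 2 ((Nat.log 2 N + 1)^(K-1) * 2^(K-1)) + 1) := by
  classical
  set t := K - 1 with htdef
  set L := Nat.log 2 N + 1 with hLdef
  have hNpos : 0 < N := lt_of_lt_of_le (Nat.pow_pos (by norm_num)) hN
  have ht1 : 1 ≤ t := by omega
  have htL : t ≤ L := by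
    have : K ≤ Nat.log 2 N := (Nat.le_log_iff_pow_le (by norm_num) (by omega)).2 hN
    omega
  have hN2L : N ≤ 2 ^ L := le_of_lt (Nat.lt_pow_succ_log_self (by norm_num) N)
  set T := (2^t - 1) * (Nat.log 2 (L^t * 2^t) + 1) with hTdef
  obtain ⟨A, hA⟩ := exists_goodArr (T := T) htL (counting_ineq L t ht1 htL)
  set 𝒯 : Fin T → List (Fin N) := fun i => testList N L (maskOf (A i)) with h𝒯
  -- covering property
  have hcover : ∀ S : Finset (Fin N), S.card ≤ K → ∀ x ∈ S, ∃ i, outcome (𝒯 i) S = some x := by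
    intro S hS x hx
    have hvalL : ∀ z : Fin N, (z : ℕ) < 2 ^ L := fun z => lt_of_lt_of_le z.isLt hN2L
    have hlogL : ∀ y : Fin N, Nat.log 2 ((x:ℕ) ^^^ (y:ℕ)) < L := by
      intro y
      rcases eq_or_ne ((x:ℕ) ^^^ (y:ℕ)) 0 with h0 | h0
      · rw [h0]; have : Nat.log 2 0 = 0 := by simp
        omega
      · exact Nat.log_lt_of_lt_pow h0 (Nat.xor_lt_two_pow (hvalL x) (hvalL y))
    set f : Fin N → Fin L := fun y => ⟨Nat.log 2 ((x:ℕ) ^^^ (y:ℕ)), hlogL y⟩ with hf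
    set P : Finset (Fin L) := (S.erase x).image f with hP
    have hPcard : P.card ≤ t := by
      calc P.card ≤ (S.erase x).card := Finset.card_image_le
        _ = S.card - 1 := Finset.card_erase_of_mem hx
        _ ≤ t := by omega
    obtain ⟨Q, hPQ, hQcard⟩ := Finset.exists_superset_card_eq hPcard
      (by rw [Fintype.card_fin]; exact htL)
    set e := Q.orderIsoOfFin hQcard with he
    set c : Fin t → Fin L := fun j => (e j : Fin L) with hc
    have hcinj : Function.Injective c := fun j1 j2 h =>
      e.injective (Subtype.ext h)
    obtain ⟨i, hi⟩ := hA c hcinj (fun j => (x : ℕ).testBit (c j))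
    refine ⟨i, ?_⟩
    have hmL := maskOf_lt (A i)
    apply outcome_testList hN2L hmL S x hx
    intro y hyS hyx
    apply xor_lt_xor (fun hc => hyx (Fin.ext hc.symm))
    have hfP : f y ∈ Q := hPQ (Finset.mem_image.2 ⟨y, Finset.mem_erase.2 ⟨hyx, hyS⟩, rfl⟩)
    obtain ⟨j, hj⟩ := e.surjective ⟨f y, hfP⟩
    have hcj : c j = f y := by rw [hc]; simp [hj]
    have h1 : (maskOf (A i)).testBit (f y) = A i (f y) := testBit_maskOf (A i) (f y)
    have h2 : A i (c j) = (x : ℕ).testBit (c j) := hi j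
    rw [hcj] at h2
    have : (maskOf (A i)).testBit (f y) = (x:ℕ).testBit (f y) := by rw [h1, ← h2]
    simpa [hf] using this
  -- feasibility
  have hfeas : Feasible N K 𝒯 := by
    intro S1 hS1 S2 hS2 h
    simp only [Set.mem_setOf_eq] at hS1 hS2
    have hh : ∀ i, outcome (𝒯 i) S1 = outcome (𝒯 i) S2 := fun i => congrFun h i
    ext v
    constructor
    · intro hv
      obtain ⟨i, hi⟩ := hcover S1 hS1 v hv
      exact outcome_mem (t := 𝒯 i) (by rw [← hh i]; exact hi)
    · intro hv
      obtain ⟨i, hi⟩ := hcover S2 hS2 v hv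
      exact outcome_mem (t := 𝒯 i) (by rw [hh i]; exact hi)
  exact Nat.sInf_le ⟨𝒯, fun i => testList_nodup N L _, hfeas⟩

end Stmt17

theorem stmt17 (K : ℕ) (hK : 3 ≤ K) :
    ∃ C : ℝ, 0 < C ∧ ∃ N₀ : ℕ, ∀ N : ℕ, N₀ ≤ N →
      (TNK N K : ℝ) ≤ C * Real.log (Real.log N) ^ (2 ^ (K - 2) - 1) := by
  have hK0 : (0:ℝ) < K := by exact_mod_cast (by omega : 0 < K)
  refine ⟨8 * 2^K * K, by positivity, 2^(2^K), ?_⟩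
  intro N hN
  have hKN : 2 ^ K ≤ N := le_trans (Nat.pow_le_pow_right (by norm_num) (Nat.lt_two_pow_self (n := K)).le) hN
  have hNpos : 0 < N := lt_of_lt_of_le (Nat.pow_pos (by norm_num)) hKN
  have h1 := Stmt17.main_bound K N hK hKN
  set t := K - 1 with ht
  set L := Nat.log 2 N + 1 with hL
  have hL1 : 1 ≤ L := by omega
  -- natural number bound
  have hnat : TNK N K ≤ 2^t * (t * (Nat.log 2 L + 2)) := by
    have h2 : Nat.log 2 (L^t * 2^t) + 1 ≤ t * (Nat.log 2 L + 2) := by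
      have hlt : L < 2 ^ (Nat.log 2 L + 1) := Nat.lt_pow_succ_log_self (by norm_num) L
      have h2L : 2 * L < 2 ^ (Nat.log 2 L + 2) := by
        rw [pow_succ]; omega
      have heq : L^t * 2^t = (2 * L)^t := by rw [mul_pow]; ring
      have hpow2 : L^t * 2^t < 2 ^ ((Nat.log 2 L + 2) * t) := by
        rw [heq, pow_mul]
        exact Nat.pow_lt_pow_left h2L (by omega)
      have h3 := Nat.log_lt_of_lt_pow (by positivity) hpow2
      rw [mul_comm (Nat.log 2 L + 2) t] at h3
      omega
    calc TNK N K ≤ (2^t - 1) * (Nat.log 2 (L^t * 2^t) + 1) := h1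
      _ ≤ 2^t * (t * (Nat.log 2 L + 2)) := Nat.mul_le_mul (Nat.sub_le _ _) h2
  -- real analysis
  set l1 := Real.log N with hl1def
  set l2 := Real.log l1 with hl2def
  have hln2 : (0.6931471803:ℝ) < Real.log 2 := Real.log_two_gt_d9
  have h8K : (8:ℝ) ≤ 2^K := by
    have h : (8:ℕ) ≤ 2^K := by
      calc (8:ℕ) = 2^3 := by norm_num
        _ ≤ 2^K := Nat.pow_le_pow_right (by norm_num) hK
    exact_mod_cast h
  have hNlog : ((2:ℝ)^K) * Real.log 2 ≤ l1 := by
    have hcast : ((2:ℝ))^((2:ℕ)^K) ≤ (N:ℝ) := by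
      have h : ((2^(2^K) : ℕ) : ℝ) ≤ (N:ℝ) := by exact_mod_cast hN
      push_cast at h
      exact h
    have h := Real.log_le_log (by positivity) hcast
    rw [Real.log_pow] at h
    have he : ((2^K : ℕ) : ℝ) = (2:ℝ)^K := by push_cast; ring
    rw [he] at h
    exact h
  have hexp : Real.exp 1 ≤ l1 := by
    have h3 : Real.exp 1 < 3 := lt_trans Real.exp_one_lt_d9 (by norm_num)
    nlinarith
  have hl1pos : (0:ℝ) < l1 := lt_of_lt_of_le (Real.exp_pos 1) hexp
  have hl1one : (1:ℝ) ≤ l1 := le_trans (by nlinarith [Real.exp_one_lt_d9, Real.add_one_le_exp (1:ℝ)]) hexp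
  have hl2one : (1:ℝ) ≤ l2 := by
    rw [hl2def, ← Real.log_exp 1]
    exact Real.log_le_log (Real.exp_pos 1) hexp
  -- bound Nat.log 2 N
  have hlogN : (Nat.log 2 N : ℝ) ≤ 2 * l1 := by
    have h : (2:ℝ) ^ (Nat.log 2 N) ≤ N := by
      exact_mod_cast Nat.pow_log_le_self 2 (by omega)
    have h2 := Real.log_le_log (by positivity) h
    rw [Real.log_pow] at h2
    nlinarith [(Nat.cast_nonneg (Nat.log 2 N) : (0:ℝ) ≤ (Nat.log 2 N : ℝ))]
  have hLreal : (L:ℝ) ≤ 3 * l1 := by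
    rw [hL]; push_cast; nlinarith
  have hlogL : (Nat.log 2 L : ℝ) ≤ 2 * Real.log L := by
    have h : (2:ℝ) ^ (Nat.log 2 L) ≤ L := by
      exact_mod_cast Nat.pow_log_le_self 2 (by omega)
    have h2 := Real.log_le_log (by positivity) h
    rw [Real.log_pow] at h2
    nlinarith [(Nat.cast_nonneg (Nat.log 2 L) : (0:ℝ) ≤ (Nat.log 2 L : ℝ))]
  have hlogL2 : Real.log L ≤ 2 + l2 := by
    have h2 : Real.log L ≤ Real.log (3 * l1) := by
      apply Real.log_le_log (by exact_mod_cast Nat.pos_of_ne_zero (by omega)) hLreal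
    have h3 : Real.log (3 * l1) = Real.log 3 + l2 := by
      rw [Real.log_mul (by norm_num) (by positivity), hl2def]
    have h4 : Real.log 3 ≤ 2 := by
      have := Real.log_le_sub_one_of_pos (x := 3) (by norm_num)
      linarith
    linarith
  have hkey : (Nat.log 2 L : ℝ) + 2 ≤ 8 * l2 := by nlinarith
  -- final assembly
  have hcastnat : (TNK N K : ℝ) ≤ (2:ℝ)^t * ((t:ℝ) * ((Nat.log 2 L : ℝ) + 2)) := by
    have h := hnat
    have h2 : ((TNK N K : ℕ) : ℝ) ≤ ((2^t * (t * (Nat.log 2 L + 2)) : ℕ) : ℝ) := by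
      exact_mod_cast h
    push_cast at h2
    exact h2
  have htK : (t:ℝ) ≤ K := by
    have h : t ≤ K := by omega
    exact_mod_cast h
  have h2tK : (2:ℝ)^t ≤ 2^K := by
    apply pow_le_pow_right₀ (by norm_num)
    omega
  have hfinal : (TNK N K : ℝ) ≤ (8 * 2^K * K) * l2 := by
    have hl2pos : (0:ℝ) < l2 := lt_of_lt_of_le one_pos hl2one
    have hb1 : (t:ℝ) * ((Nat.log 2 L : ℝ) + 2) ≤ (K:ℝ) * (8 * l2) := by
      apply mul_le_mul htK hkey (by positivity) (le_of_lt hK0)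
    calc (TNK N K : ℝ) ≤ (2:ℝ)^t * ((t:ℝ) * ((Nat.log 2 L : ℝ) + 2)) := hcastnat
      _ ≤ (2:ℝ)^K * ((K:ℝ) * (8 * l2)) := by
          apply mul_le_mul h2tK hb1 (by positivity) (by positivity)
      _ = (8 * 2^K * K) * l2 := by ring
  have hpow : l2 ≤ l2 ^ (2 ^ (K - 2) - 1) := by
    apply le_self_pow₀ hl2one
    have : 2 ≤ 2 ^ (K - 2) := by
      calc (2:ℕ) = 2^1 := (pow_one 2).symm
        _ ≤ 2 ^ (K-2) := Nat.pow_le_pow_right (by norm_num) (by omega)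
    omega
  calc (TNK N K : ℝ) ≤ (8 * 2^K * K) * l2 := hfinal
    _ ≤ (8 * 2^K * K) * l2 ^ (2 ^ (K - 2) - 1) := by
        apply mul_le_mul_of_nonneg_left hpow (by positivity)
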